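/- If $v_0, v_6, v_{12} \ge 0$ and $\sqrt{v_0 v_{12}} \ge (560 + 70\sqrt{70}) v_6$, then the polynomial $f(x_1,x_2,x_3) = v_0 x_1^6 + v_6(x_2^6 + 30 x_1 x_2^4 x_3 + 90 x_1^2 x_2^2 x_3^2 + 20 x_1^3 x_3^3) + v_{12} x_3^6$ is a sum of squares of real polynomials of degree 3. -/

import Mathlib

open MvPolynomial

lemma homTerm3 (a : ℝ) (e0 e1 e2 : ℕ) (h : e0 + e1 + e2 = 3) :
    ((C a * (X 0 ^ e0 * X 1 ^ e1 * X 2 ^ e2)) : MvPolynomial (Fin 3) ℝ).IsHomogeneous 3 := by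
  have H := (MvPolynomial.isHomogeneous_C (Fin 3) a).mul
    (((MvPolynomial.isHomogeneous_X_pow (R := ℝ) 0 e0).mul
      (MvPolynomial.isHomogeneous_X_pow (R := ℝ) 1 e1)).mul
      (MvPolynomial.isHomogeneous_X_pow (R := ℝ) 2 e2))
  rw [zero_add] at H
  rwa [h] at H

theorem key70 (t X Y Z : ℝ) (ht : t^2 = 70) :
    (560 + 70*t)*(X^6+Z^6) + (Y^6 + 30*X*Y^4*Z + 90*X^2*Y^2*Z^2 + 20*X^3*Z^3) =
      ((255) + (35)*t) * ((1)*Z^3 + ((857/829) + (-219/1658)*t)*Y^2*Z + ((306/829) + (-42/829)*t)*X*Z^2 + ((857/829) + (-219/1658)*t)*X*Y^2 + ((306/829) + (-42/829)*t)*X^2*Z + (1)*X^3)^2 +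
      ((85090/829) + (-9127/829)*t) * ((1)*Y^2*Z + ((325/5151) + (-164/5151)*t)*X*Z^2 + (1)*X*Y^2 + ((325/5151) + (-164/5151)*t)*X^2*Z)^2 +
      ((155020/1717) + (-485/1717)*t) * ((1)*X*Z^2 + (1)*X^2*Z)^2 +
      ((305) + (35)*t) * ((-1)*Z^3 + ((-41/97) + (11/194)*t)*Y^2*Z + ((-122/97) + (14/97)*t)*X*Z^2 + ((41/97) + (-11/194)*t)*X*Y^2 + ((122/97) + (-14/97)*t)*X^2*Z + (1)*X^3)^2 +
      ((-795/97) + (96/97)*t) * ((-1)*Y^2*Z + ((-10) + (-1)*t)*X*Z^2 + (1)*X*Y^2 + ((10) + (1)*t)*X^2*Z)^2 +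
      (1) * ((-15/2)*Y*Z^2 + (1)*Y^3 + ((-5) + (1)*t)*X*Y*Z + (-15/2)*X^2*Y)^2 +
      ((25/4) + (5/4)*t) * ((1)*Y*Z^2 + (2)*X*Y*Z + (1)*X^2*Y)^2 +
      ((155/2) + (-5/4)*t) * ((-1)*Y*Z^2 + (1)*X^2*Y)^2 := by
  linear_combination (-((-1062670/80413)*Y^2*Z^4 + (-37546122180/6466250569)*Y^4*Z^2 + (9352371175/12932501138)*Y^4*Z^2*t + (-1097600/80413)*X*Z^5 + (-350835184260020/33307656680919)*X*Y^2*Z^3 + (6733268360/6466250569)*X*Y^2*Z^3*t + (-57062476725/6466250569)*X*Y^4*Z + (6441905540/6466250569)*X*Y^4*Z*t + (1937831500662678125/171567739563413769)*X^2*Z^4 + (308385636929179400/171567739563413769)*X^2*Z^4*t + (-11602110222697/33307656680919)*X^2*Y^2*Z^2 + (-1350379240/6466250569)*X^2*Y^2*Z^2*t + (-37546122180/6466250569)*X^2*Y^4 + (9352371175/12932501138)*X^2*Y^4*t + (-1973268214991468570/171567739563413769)*X^3*Z^3 + (-562777449372389408/171567739563413769)*X^3*Z^3*t + (-350835184260020/33307656680919)*X^3*Y^2*Z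 + (6733268360/6466250569)*X^3*Y^2*Z*t + (1937831500662678125/171567739563413769)*X^4*Z^2 + (308385636929179400/171567739563413769)*X^4*Z^2*t + (-1062670/80413)*X^4*Y^2 + (-1097600/80413)*X^5*Z)) * ht

set_option maxHeartbeats 1600000 in
theorem stmt_3 (v0 v6 v12 : ℝ) (hv0 : 0 ≤ v0) (hv6 : 0 ≤ v6) (hv12 : 0 ≤ v12)
    (h : Real.sqrt (v0 * v12) ≥ (560 + 70 * Real.sqrt 70) * v6) :
    ∃ (k : ℕ) (g : Fin k → MvPolynomial (Fin 3) ℝ),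
      (∀ i, (g i).IsHomogeneous 3) ∧
      (C v0 * X 0 ^ 6 +
        C v6 * (X 1 ^ 6 + C 30 * X 0 * X 1 ^ 4 * X 2 +
          C 90 * X 0 ^ 2 * X 1 ^ 2 * X 2 ^ 2 + C 20 * X 0 ^ 3 * X 2 ^ 3) +
        C v12 * X 2 ^ 6 : MvPolynomial (Fin 3) ℝ) = ∑ i, (g i) ^ 2 := by
  set t := Real.sqrt 70 with htdef
  have ht2 : t ^ 2 = 70 := Real.sq_sqrt (by norm_num)
  have ht0 : (0:ℝ) ≤ t := Real.sqrt_nonneg 70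
  have ht83 : (83:ℝ)/10 ≤ t := by nlinarith [ht2, ht0]
  have ht84 : t ≤ (42:ℝ)/5 := by nlinarith [ht2, ht0]
  set s := Real.sqrt (v0 * v12) with hsdef
  by_cases h0 : v0 = 0 ∨ v12 = 0
  · -- degenerate case: v6 = 0
    have hsz : s = 0 := by
      rcases h0 with h0 | h0 <;> simp [hsdef, h0]
    have hv6z : v6 = 0 := by
      rw [hsz] at h
      have := mul_nonneg ht0 hv6
      nlinarith
    refine ⟨10, ![C (Real.sqrt v0) * (X 0 ^ 3 * X 1 ^ 0 * X 2 ^ 0),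
      C (Real.sqrt v12) * (X 0 ^ 0 * X 1 ^ 0 * X 2 ^ 3), 0, 0, 0, 0, 0, 0, 0, 0], ?_, ?_⟩
    · intro i
      fin_cases i <;>
        simp only [Matrix.cons_val_zero, Matrix.cons_val_succ] <;>
        first
          | exact MvPolynomial.isHomogeneous_zero _ _ _
          | exact homTerm3 _ _ _ _ rfl
    · apply MvPolynomial.funext
      intro x
      simp only [map_add, map_mul, map_pow, eval_C, eval_X, Fin.sum_univ_succ,
        Fin.sum_univ_zero, Matrix.cons_val_zero, Matrix.cons_val_succ, add_zero, map_zero]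
      have e0 : Real.sqrt v0 ^ 2 = v0 := Real.sq_sqrt hv0
      have e12 : Real.sqrt v12 ^ 2 = v12 := Real.sq_sqrt hv12
      rw [hv6z]
      linear_combination (-((x 0)^3*(x 1)^0*(x 2)^0)^2) * e0 + (-((x 0)^0*(x 1)^0*(x 2)^3)^2) * e12
  · push_neg at h0
    have hv0p : 0 < v0 := lt_of_le_of_ne hv0 (Ne.symm h0.1)
    have hv12p : 0 < v12 := lt_of_le_of_ne hv12 (Ne.symm h0.2)
    have hdiv : (0:ℝ) < v0 / v12 := div_pos hv0p hv12p
    set τ : ℝ := (v0 / v12) ^ ((1:ℝ)/12) with hτdef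
    have hτpos : 0 < τ := Real.rpow_pos_of_pos hdiv _
    have hτ6 : τ ^ 6 = Real.sqrt (v0 / v12) := by
      rw [hτdef, ← Real.rpow_natCast ((v0 / v12) ^ ((1:ℝ)/12)) 6,
        ← Real.rpow_mul hdiv.le, Real.sqrt_eq_rpow]
      norm_num
    have hst6 : s * τ ^ 6 = v0 := by
      rw [hτ6, hsdef, ← Real.sqrt_mul (by positivity)]
      rw [show v0 * v12 * (v0 / v12) = v0 ^ 2 by field_simp]
      exact Real.sqrt_sq hv0
    have hst6' : s * τ⁻¹ ^ 6 = v12 := by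
      rw [inv_pow, hτ6, ← Real.sqrt_inv, hsdef, ← Real.sqrt_mul (by positivity)]
      rw [show v0 * v12 * (v0 / v12)⁻¹ = v12 ^ 2 by field_simp]
      exact Real.sqrt_sq hv12
    have hττ : τ * τ⁻¹ = 1 := mul_inv_cancel₀ (ne_of_gt hτpos)
    have hq0 : Real.sqrt (v6 * ((255) + (35)*t)) ^ 2 = v6 * ((255) + (35)*t) :=
      Real.sq_sqrt (mul_nonneg hv6 (by linarith))
    have hq1 : Real.sqrt (v6 * ((85090/829) + (-9127/829)*t)) ^ 2 = v6 * ((85090/829) + (-9127/829)*t) :=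
      Real.sq_sqrt (mul_nonneg hv6 (by linarith))
    have hq2 : Real.sqrt (v6 * ((155020/1717) + (-485/1717)*t)) ^ 2 = v6 * ((155020/1717) + (-485/1717)*t) :=
      Real.sq_sqrt (mul_nonneg hv6 (by linarith))
    have hq3 : Real.sqrt (v6 * ((305) + (35)*t)) ^ 2 = v6 * ((305) + (35)*t) :=
      Real.sq_sqrt (mul_nonneg hv6 (by linarith))
    have hq4 : Real.sqrt (v6 * ((-795/97) + (96/97)*t)) ^ 2 = v6 * ((-795/97) + (96/97)*t) :=
      Real.sq_sqrt (mul_nonneg hv6 (by linarith))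
    have hq5 : Real.sqrt (v6 * (1)) ^ 2 = v6 * (1) :=
      Real.sq_sqrt (mul_nonneg hv6 (by linarith))
    have hq6 : Real.sqrt (v6 * ((25/4) + (5/4)*t)) ^ 2 = v6 * ((25/4) + (5/4)*t) :=
      Real.sq_sqrt (mul_nonneg hv6 (by linarith))
    have hq7 : Real.sqrt (v6 * ((155/2) + (-5/4)*t)) ^ 2 = v6 * ((155/2) + (-5/4)*t) :=
      Real.sq_sqrt (mul_nonneg hv6 (by linarith))
    have hq8 : Real.sqrt ((s - (560 + 70*t)*v6) * τ^6) ^ 2 = (s - (560 + 70*t)*v6) * τ^6 :=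
      Real.sq_sqrt (mul_nonneg (by linarith) (pow_nonneg hτpos.le 6))
    have hq9 : Real.sqrt ((s - (560 + 70*t)*v6) * τ⁻¹^6) ^ 2 = (s - (560 + 70*t)*v6) * τ⁻¹^6 :=
      Real.sq_sqrt (mul_nonneg (by linarith) (pow_nonneg (inv_pos.mpr hτpos).le 6))
    refine ⟨10, ![C (Real.sqrt (v6 * ((255) + (35)*t)) * (1) * τ⁻¹^3) * (X 0 ^ 0 * X 1 ^ 0 * X 2 ^ 3) +
      C (Real.sqrt (v6 * ((255) + (35)*t)) * ((857/829) + (-219/1658)*t) * τ⁻¹^1) * (X 0 ^ 0 * X 1 ^ 2 * X 2 ^ 1) +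
      C (Real.sqrt (v6 * ((255) + (35)*t)) * ((306/829) + (-42/829)*t) * τ^1 * τ⁻¹^2) * (X 0 ^ 1 * X 1 ^ 0 * X 2 ^ 2) +
      C (Real.sqrt (v6 * ((255) + (35)*t)) * ((857/829) + (-219/1658)*t) * τ^1) * (X 0 ^ 1 * X 1 ^ 2 * X 2 ^ 0) +
      C (Real.sqrt (v6 * ((255) + (35)*t)) * ((306/829) + (-42/829)*t) * τ^2 * τ⁻¹^1) * (X 0 ^ 2 * X 1 ^ 0 * X 2 ^ 1) +
      C (Real.sqrt (v6 * ((255) + (35)*t)) * (1) * τ^3) * (X 0 ^ 3 * X 1 ^ 0 * X 2 ^ 0),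
      C (Real.sqrt (v6 * ((85090/829) + (-9127/829)*t)) * (1) * τ⁻¹^1) * (X 0 ^ 0 * X 1 ^ 2 * X 2 ^ 1) +
      C (Real.sqrt (v6 * ((85090/829) + (-9127/829)*t)) * ((325/5151) + (-164/5151)*t) * τ^1 * τ⁻¹^2) * (X 0 ^ 1 * X 1 ^ 0 * X 2 ^ 2) +
      C (Real.sqrt (v6 * ((85090/829) + (-9127/829)*t)) * (1) * τ^1) * (X 0 ^ 1 * X 1 ^ 2 * X 2 ^ 0) +
      C (Real.sqrt (v6 * ((85090/829) + (-9127/829)*t)) * ((325/5151) + (-164/5151)*t) * τ^2 * τ⁻¹^1) * (X 0 ^ 2 * X 1 ^ 0 * X 2 ^ 1),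
      C (Real.sqrt (v6 * ((155020/1717) + (-485/1717)*t)) * (1) * τ^1 * τ⁻¹^2) * (X 0 ^ 1 * X 1 ^ 0 * X 2 ^ 2) +
      C (Real.sqrt (v6 * ((155020/1717) + (-485/1717)*t)) * (1) * τ^2 * τ⁻¹^1) * (X 0 ^ 2 * X 1 ^ 0 * X 2 ^ 1),
      C (Real.sqrt (v6 * ((305) + (35)*t)) * (-1) * τ⁻¹^3) * (X 0 ^ 0 * X 1 ^ 0 * X 2 ^ 3) +
      C (Real.sqrt (v6 * ((305) + (35)*t)) * ((-41/97) + (11/194)*t) * τ⁻¹^1) * (X 0 ^ 0 * X 1 ^ 2 * X 2 ^ 1) +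
      C (Real.sqrt (v6 * ((305) + (35)*t)) * ((-122/97) + (14/97)*t) * τ^1 * τ⁻¹^2) * (X 0 ^ 1 * X 1 ^ 0 * X 2 ^ 2) +
      C (Real.sqrt (v6 * ((305) + (35)*t)) * ((41/97) + (-11/194)*t) * τ^1) * (X 0 ^ 1 * X 1 ^ 2 * X 2 ^ 0) +
      C (Real.sqrt (v6 * ((305) + (35)*t)) * ((122/97) + (-14/97)*t) * τ^2 * τ⁻¹^1) * (X 0 ^ 2 * X 1 ^ 0 * X 2 ^ 1) +
      C (Real.sqrt (v6 * ((305) + (35)*t)) * (1) * τ^3) * (X 0 ^ 3 * X 1 ^ 0 * X 2 ^ 0),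
      C (Real.sqrt (v6 * ((-795/97) + (96/97)*t)) * (-1) * τ⁻¹^1) * (X 0 ^ 0 * X 1 ^ 2 * X 2 ^ 1) +
      C (Real.sqrt (v6 * ((-795/97) + (96/97)*t)) * ((-10) + (-1)*t) * τ^1 * τ⁻¹^2) * (X 0 ^ 1 * X 1 ^ 0 * X 2 ^ 2) +
      C (Real.sqrt (v6 * ((-795/97) + (96/97)*t)) * (1) * τ^1) * (X 0 ^ 1 * X 1 ^ 2 * X 2 ^ 0) +
      C (Real.sqrt (v6 * ((-795/97) + (96/97)*t)) * ((10) + (1)*t) * τ^2 * τ⁻¹^1) * (X 0 ^ 2 * X 1 ^ 0 * X 2 ^ 1),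
      C (Real.sqrt (v6 * (1)) * (-15/2) * τ⁻¹^2) * (X 0 ^ 0 * X 1 ^ 1 * X 2 ^ 2) +
      C (Real.sqrt (v6 * (1)) * (1)) * (X 0 ^ 0 * X 1 ^ 3 * X 2 ^ 0) +
      C (Real.sqrt (v6 * (1)) * ((-5) + (1)*t) * τ^1 * τ⁻¹^1) * (X 0 ^ 1 * X 1 ^ 1 * X 2 ^ 1) +
      C (Real.sqrt (v6 * (1)) * (-15/2) * τ^2) * (X 0 ^ 2 * X 1 ^ 1 * X 2 ^ 0),
      C (Real.sqrt (v6 * ((25/4) + (5/4)*t)) * (1) * τ⁻¹^2) * (X 0 ^ 0 * X 1 ^ 1 * X 2 ^ 2) +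
      C (Real.sqrt (v6 * ((25/4) + (5/4)*t)) * (2) * τ^1 * τ⁻¹^1) * (X 0 ^ 1 * X 1 ^ 1 * X 2 ^ 1) +
      C (Real.sqrt (v6 * ((25/4) + (5/4)*t)) * (1) * τ^2) * (X 0 ^ 2 * X 1 ^ 1 * X 2 ^ 0),
      C (Real.sqrt (v6 * ((155/2) + (-5/4)*t)) * (-1) * τ⁻¹^2) * (X 0 ^ 0 * X 1 ^ 1 * X 2 ^ 2) +
      C (Real.sqrt (v6 * ((155/2) + (-5/4)*t)) * (1) * τ^2) * (X 0 ^ 2 * X 1 ^ 1 * X 2 ^ 0),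
      C (Real.sqrt ((s - (560 + 70*t)*v6) * τ^6)) * (X 0 ^ 3 * X 1 ^ 0 * X 2 ^ 0),
      C (Real.sqrt ((s - (560 + 70*t)*v6) * τ⁻¹^6)) * (X 0 ^ 0 * X 1 ^ 0 * X 2 ^ 3)], ?_, ?_⟩
    · intro i
      fin_cases i <;>
        simp only [Matrix.cons_val_zero, Matrix.cons_val_succ] <;>
        (repeat' apply MvPolynomial.IsHomogeneous.add) <;>
        exact homTerm3 _ _ _ _ rfl
    · apply MvPolynomial.funext
      intro x
      simp only [map_add, map_mul, map_pow, eval_C, eval_X, Fin.sum_univ_succ,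
        Fin.sum_univ_zero, Matrix.cons_val_zero, Matrix.cons_val_succ, add_zero]
      linear_combination
        v6 * key70 t (τ*(x 0)) (x 1) (τ⁻¹*(x 2)) ht2 +
        (-((1)*τ⁻¹^3*(x 2)^3 + ((857/829) + (-219/1658)*t)*τ⁻¹^1*(x 1)^2*(x 2)^1 + ((306/829) + (-42/829)*t)*τ^1*τ⁻¹^2*(x 0)^1*(x 2)^2 + ((857/829) + (-219/1658)*t)*τ^1*(x 0)^1*(x 1)^2 + ((306/829) + (-42/829)*t)*τ^2*τ⁻¹^1*(x 0)^2*(x 2)^1 + (1)*τ^3*(x 0)^3)^2) * hq0 +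
        (-((1)*τ⁻¹^1*(x 1)^2*(x 2)^1 + ((325/5151) + (-164/5151)*t)*τ^1*τ⁻¹^2*(x 0)^1*(x 2)^2 + (1)*τ^1*(x 0)^1*(x 1)^2 + ((325/5151) + (-164/5151)*t)*τ^2*τ⁻¹^1*(x 0)^2*(x 2)^1)^2) * hq1 +
        (-((1)*τ^1*τ⁻¹^2*(x 0)^1*(x 2)^2 + (1)*τ^2*τ⁻¹^1*(x 0)^2*(x 2)^1)^2) * hq2 +
        (-((-1)*τ⁻¹^3*(x 2)^3 + ((-41/97) + (11/194)*t)*τ⁻¹^1*(x 1)^2*(x 2)^1 + ((-122/97) + (14/97)*t)*τ^1*τ⁻¹^2*(x 0)^1*(x 2)^2 + ((41/97) + (-11/194)*t)*τ^1*(x 0)^1*(x 1)^2 + ((122/97) + (-14/97)*t)*τ^2*τ⁻¹^1*(x 0)^2*(x 2)^1 + (1)*τ^3*(x 0)^3)^2) * hq3 +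
        (-((-1)*τ⁻¹^1*(x 1)^2*(x 2)^1 + ((-10) + (-1)*t)*τ^1*τ⁻¹^2*(x 0)^1*(x 2)^2 + (1)*τ^1*(x 0)^1*(x 1)^2 + ((10) + (1)*t)*τ^2*τ⁻¹^1*(x 0)^2*(x 2)^1)^2) * hq4 +
        (-((-15/2)*τ⁻¹^2*(x 1)^1*(x 2)^2 + (1)*(x 1)^3 + ((-5) + (1)*t)*τ^1*τ⁻¹^1*(x 0)^1*(x 1)^1*(x 2)^1 + (-15/2)*τ^2*(x 0)^2*(x 1)^1)^2) * hq5 +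
        (-((1)*τ⁻¹^2*(x 1)^1*(x 2)^2 + (2)*τ^1*τ⁻¹^1*(x 0)^1*(x 1)^1*(x 2)^1 + (1)*τ^2*(x 0)^2*(x 1)^1)^2) * hq6 +
        (-((-1)*τ⁻¹^2*(x 1)^1*(x 2)^2 + (1)*τ^2*(x 0)^2*(x 1)^1)^2) * hq7 +
        (-(x 0)^6) * hq8 +
        (-(x 2)^6) * hq9 +
        (-(x 0)^6) * hst6 +
        (-(x 2)^6) * hst6' +
        (-(v6*(30*(x 0)*(x 1)^4*(x 2) + 90*(x 0)^2*(x 1)^2*(x 2)^2*(τ*τ⁻¹+1) + 20*(x 0)^3*(x 2)^3*((τ*τ⁻¹)^2+τ*τ⁻¹+1)))) * hττ
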